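/- Let n ≥ 3. Then every permutation σ of the set Fin n → ZMod 2 that preserves the Hamming distance (i.e. hammingDist(σ x, σ y) = hammingDist(x, y) for all x, y : Fin n → ZMod 2) has order strictly less than 2^n. -/

import Mathlib

open Finset

-- arithmetic helpers
lemma aux_two_mul_le_pow {a : ℕ} (ha : 2 ≤ a) : 2 * a ≤ 2 ^ a := by
  induction a with
  | zero => omega
  | succ k ih =>
    rcases Nat.lt_or_ge k 2 with hk | hk
    · interval_cases k <;> simp_all
    · have h1 := ih hk
      have h2 : 2 ≤ 2 ^ k := Nat.one_lt_two_pow_iff.mpr (by omega)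
      rw [pow_succ]; omega

lemma aux_lt_pow_pred {n : ℕ} (hn : 3 ≤ n) : n < 2 ^ (n - 1) := by
  induction n with
  | zero => omega
  | succ k ih =>
    rcases Nat.lt_or_ge k 3 with hk | hk
    · interval_cases k
      · omega
      · omega
      · norm_num
    · have h1 := ih hk
      have h2 : (k + 1) - 1 = (k-1) + 1 := by omega
      rw [h2, pow_succ]
      omega

lemma aux_prod_le (M : Multiset ℕ) (h : ∀ a ∈ M, 2 ≤ a) :
    M.prod * 2 ^ Multiset.card M ≤ 2 ^ M.sum := by
  induction M using Multiset.induction with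
  | empty => simp
  | cons a s ih =>
    have ha : 2 ≤ a := h a (Multiset.mem_cons_self a s)
    have hs := ih (fun b hb => h b (Multiset.mem_cons_of_mem hb))
    have h1 : 2 * a ≤ 2 ^ a := aux_two_mul_le_pow ha
    simp only [Multiset.prod_cons, Multiset.card_cons, Multiset.sum_cons, pow_succ, pow_add]
    calc a * s.prod * (2 ^ Multiset.card s * 2) = (2 * a) * (s.prod * 2 ^ Multiset.card s) := by ring
    _ ≤ 2 ^ a * 2 ^ s.sum := Nat.mul_le_mul h1 hs

lemma aux_lcm_lt (n : ℕ) (hn : 3 ≤ n) (M : Multiset ℕ) (h2 : ∀ a ∈ M, 2 ≤ a)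
    (hsum : M.sum ≤ n) : M.lcm < 2 ^ (n - 1) := by
  have hpow : (4 : ℕ) ≤ 2 ^ (n - 1) := by
    calc (4:ℕ) = 2^2 := by norm_num
    _ ≤ 2 ^ (n-1) := Nat.pow_le_pow_right (by norm_num) (by omega)
  rcases Nat.lt_or_ge (Multiset.card M) 2 with hc | hc
  · -- card 0 or 1
    rcases Nat.lt_or_ge (Multiset.card M) 1 with hc0 | hc1
    · have : M = 0 := Multiset.card_eq_zero.mp (by omega)
      subst this; rw [Multiset.lcm_zero]; omega
    · have hM1 : Multiset.card M = 1 := by omega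
      obtain ⟨a, rfl⟩ := Multiset.card_eq_one.mp hM1
      have : Multiset.lcm {a} = a := by
        rw [Multiset.lcm_singleton]; exact normalize_eq a
      rw [this]
      have : a ≤ n := by simpa using hsum
      exact lt_of_le_of_lt this (aux_lt_pow_pred hn)
  · -- card ≥ 2
    have hprodpos : 0 < M.prod := Multiset.prod_pos (fun a ha => by have := h2 a ha; omega)
    have hdvd : M.lcm ∣ M.prod := Multiset.lcm_dvd.mpr (fun a ha => Multiset.dvd_prod ha)
    have hle : M.lcm ≤ M.prod := Nat.le_of_dvd hprodpos hdvd
    have h4 : 2 ^ 2 ≤ 2 ^ Multiset.card M := Nat.pow_le_pow_right (by norm_num) hc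
    have := aux_prod_le M h2
    have hps : (2:ℕ) ^ M.sum ≤ 2 ^ n := Nat.pow_le_pow_right (by norm_num) hsum
    have hkey : M.prod * 4 ≤ 2 ^ n := by
      calc M.prod * 4 = M.prod * 2^2 := by norm_num
      _ ≤ M.prod * 2 ^ Multiset.card M := Nat.mul_le_mul_left _ h4
      _ ≤ 2 ^ M.sum := this
      _ ≤ 2 ^ n := hps
    have h2n : (2:ℕ) ^ n = 2 ^ (n-1) * 2 := by
      rw [← pow_succ]; congr 1; omega
    have : M.prod * 4 ≤ 2 ^ (n-1) * 2 := h2n ▸ hkey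
    have hpos : 0 < 2 ^ (n-1) := Nat.pow_pos (by norm_num)
    omega

-- order of a perm of Fin n is < 2^(n-1)
lemma aux_orderOf_perm_lt (n : ℕ) (hn : 3 ≤ n) (p : Equiv.Perm (Fin n)) :
    orderOf p < 2 ^ (n - 1) := by
  rw [← Equiv.Perm.lcm_cycleType]
  apply aux_lcm_lt n hn
  · exact fun a ha => Equiv.Perm.two_le_of_mem_cycleType ha
  · rw [Equiv.Perm.sum_cycleType]
    calc p.support.card ≤ Fintype.card (Fin n) := Finset.card_le_univ _
    _ = n := Fintype.card_fin n

lemma aux_zmod_eq_of_ne_iff : ∀ a b : ZMod 2, (a ≠ 0 ↔ b ≠ 0) → a = b := by decide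

lemma aux_zmod_eq_one {a : ZMod 2} (h : a ≠ 0) : a = 1 := by revert h; revert a; decide

lemma aux_dist_single_lt_iff {n : ℕ} (y : Fin n → ZMod 2) (j : Fin n) :
    hammingDist y (Pi.single j 1) < hammingNorm y ↔ y j ≠ 0 := by
  classical
  have hd : hammingDist y (Pi.single j 1)
      = (Finset.univ.filter fun i => y i ≠ (Pi.single j 1 : Fin n → ZMod 2) i).card := rfl
  have hw : hammingNorm y = (Finset.univ.filter fun i => y i ≠ 0).card := rfl
  by_cases h : y j = 0
  · have hST : (Finset.univ.filter fun i => y i ≠ (Pi.single j 1 : Fin n → ZMod 2) i)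
        = insert j (Finset.univ.filter fun i => y i ≠ 0) := by
      ext i
      by_cases hij : i = j
      · subst hij; simp [h, Pi.single_apply]
      · simp [hij, Pi.single_apply]
    have hjn : j ∉ (Finset.univ.filter fun i => y i ≠ 0) := by simp [h]
    have : hammingDist y (Pi.single j 1) = hammingNorm y + 1 := by
      rw [hd, hw, hST, Finset.card_insert_of_notMem hjn]
    simp [this, h]
  · have hy1 : y j = 1 := aux_zmod_eq_one h
    have hST : (Finset.univ.filter fun i => y i ≠ (Pi.single j 1 : Fin n → ZMod 2) i)
        = (Finset.univ.filter fun i => y i ≠ 0).erase j := by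
      ext i
      by_cases hij : i = j
      · subst hij; simp [hy1, Pi.single_apply]
      · simp [hij, Pi.single_apply]
    have hjm : j ∈ (Finset.univ.filter fun i => y i ≠ 0) := by simp [h]
    have hcard : (Finset.univ.filter fun i => y i ≠ 0).card ≥ 1 :=
      Finset.card_pos.mpr ⟨j, hjm⟩
    have : hammingDist y (Pi.single j 1) = hammingNorm y - 1 := by
      rw [hd, hw, hST, Finset.card_erase_of_mem hjm]
    rw [hw] at this ⊢
    simp only [this, h]
    constructor
    · intro _; exact h
    · intro _; omega

lemma aux_norm_one {n : ℕ} {y : Fin n → ZMod 2} (h : hammingNorm y = 1) :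
    ∃ j, y = Pi.single j 1 := by
  classical
  have h' : (Finset.univ.filter fun i => y i ≠ 0).card = 1 := h
  obtain ⟨j, hj⟩ := Finset.card_eq_one.mp h'
  refine ⟨j, funext fun i => ?_⟩
  by_cases hij : i = j
  · subst hij
    have : i ∈ (Finset.univ.filter fun k => y k ≠ 0) := by
      rw [hj]; exact Finset.mem_singleton_self i
    simp only [Finset.mem_filter] at this
    rw [Pi.single_eq_same]
    exact aux_zmod_eq_one this.2
  · have : i ∉ (Finset.univ.filter fun k => y k ≠ 0) := by
      rw [hj]; simp [hij]
    simp only [Finset.mem_filter, Finset.mem_univ, true_and, not_not] at this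
    rw [this, Pi.single_eq_of_ne hij]

lemma aux_norm_single {n : ℕ} (j : Fin n) : hammingNorm (Pi.single j 1 : Fin n → ZMod 2) = 1 := by
  classical
  have : (Finset.univ.filter fun i => (Pi.single j 1 : Fin n → ZMod 2) i ≠ 0) = {j} := by
    ext i
    by_cases hij : i = j
    · subst hij; simp
    · simp [hij, Pi.single_eq_of_ne hij]
  show (Finset.univ.filter fun i => (Pi.single j 1 : Fin n → ZMod 2) i ≠ 0).card = 1
  rw [this, Finset.card_singleton]

theorem stmt_4 (n : ℕ) (hn : 3 ≤ n) (σ : Equiv.Perm (Fin n → ZMod 2))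
    (hσ : ∀ x y : Fin n → ZMod 2, hammingDist (σ x) (σ y) = hammingDist x y) :
    orderOf σ < 2 ^ n := by
  classical
  set f : (Fin n → ZMod 2) → (Fin n → ZMod 2) := fun x => σ x + σ 0 with hf
  have hadd : ∀ a : ZMod 2, a + a = 0 := by decide
  have haddv : ∀ v : Fin n → ZMod 2, v + v = 0 := fun v => funext fun i => hadd _
  have hf0 : f 0 = 0 := haddv _
  have hfd : ∀ x y, hammingDist (f x) (f y) = hammingDist x y := by
    intro x y
    have h1 : -f x + f y = -σ x + σ y := by
      simp only [hf]; abel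
    rw [hammingDist_eq_hammingNorm, h1, ← hammingDist_eq_hammingNorm, hσ]
  have hfw : ∀ x, hammingNorm (f x) = hammingNorm x := by
    intro x
    calc hammingNorm (f x) = hammingDist (f x) (f 0) := by
          rw [hf0, hammingDist_zero_right]
    _ = hammingDist x 0 := hfd x 0
    _ = hammingNorm x := hammingDist_zero_right x
  have hfinj : Function.Injective f := by
    intro a b hab
    exact σ.injective (add_right_cancel hab)
  have hunit : ∀ i : Fin n, ∃ j, f (Pi.single i 1) = Pi.single j 1 := by
    intro i
    apply aux_norm_one
    rw [hfw, aux_norm_single]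
  choose p0 hp0 using hunit
  have hp0inj : Function.Injective p0 := by
    intro a b hab
    have h1 : f (Pi.single a 1) = f (Pi.single b 1) := by rw [hp0, hp0, hab]
    have h2 := hfinj h1
    by_contra hne
    have h3 := congrFun h2 a
    rw [Pi.single_eq_same, Pi.single_eq_of_ne hne] at h3
    exact one_ne_zero h3
  let pe : Equiv.Perm (Fin n) := Equiv.ofBijective p0
    (Finite.injective_iff_bijective.mp hp0inj)
  have hpe : ∀ i, pe i = p0 i := fun i => rfl
  have hkey : ∀ (x : Fin n → ZMod 2) (i : Fin n), f x (p0 i) = x i := by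
    intro x i
    apply aux_zmod_eq_of_ne_iff
    rw [← aux_dist_single_lt_iff (f x) (p0 i), ← aux_dist_single_lt_iff x i,
      ← hp0 i, hfd, hfw]
  have hfx : ∀ x, f x = fun j => x (pe.symm j) := by
    intro x; funext j
    have h1 := hkey x (pe.symm j)
    have hj : p0 (pe.symm j) = j := pe.apply_symm_apply j
    rw [hj] at h1; exact h1
  have hfk : ∀ (k : ℕ) (x : Fin n → ZMod 2), f^[k] x = fun j => x ((pe.symm ^ k) j) := by
    intro k
    induction k with
    | zero => intro x; simp
    | succ k ih =>
      intro x
      rw [Function.iterate_succ_apply', ih, hfx]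
      funext j
      simp [pow_succ, Equiv.Perm.mul_apply]
  set m := orderOf pe with hm
  have hmpos : 0 < m := orderOf_pos pe
  have hpem : pe.symm ^ m = 1 := by
    have h1 : pe ^ m = 1 := pow_orderOf_eq_one pe
    calc pe.symm ^ m = (pe⁻¹) ^ m := rfl
    _ = (pe ^ m)⁻¹ := (inv_pow pe m).symm
    _ = 1 := by rw [h1]; simp
  have hfm : ∀ x, f^[m] x = x := by
    intro x; rw [hfk, hpem]; simp
  have hσy : ∀ y, σ y = f y + σ 0 := by
    intro y
    rw [hf]
    simp only [add_assoc, haddv, add_zero]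
  have hσk : ∀ (k : ℕ) (x : Fin n → ZMod 2), (σ ^ k) x = f^[k] x + (σ ^ k) 0 := by
    intro k
    induction k with
    | zero => intro x; simp
    | succ k ih =>
      intro x
      rw [pow_succ', Equiv.Perm.mul_apply, Equiv.Perm.mul_apply, ih x, ih 0,
        Function.iterate_succ_apply', hσy, hσy (f^[k] 0 + (σ ^ k) 0)]
      have hfk0 : f^[k] (0 : Fin n → ZMod 2) = 0 := by
        rw [hfk]; funext j; simp
      rw [hfk0, zero_add]
      have hadd2 : f (f^[k] x + (σ ^ k) 0) = f (f^[k] x) + f ((σ ^ k) 0) := by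
        rw [hfx, hfx, hfx]; funext j; simp
      rw [hadd2]
      abel
  have hpow2m : σ ^ (2 * m) = 1 := by
    ext x
    have h1 : (σ ^ (2 * m)) x = (σ ^ m) ((σ ^ m) x) := by
      rw [two_mul, pow_add, Equiv.Perm.mul_apply]
    rw [Equiv.Perm.one_apply, h1, hσk m, hσk m, hfm, hfm, add_assoc, haddv, add_zero]
  have hdvd : orderOf σ ∣ 2 * m := orderOf_dvd_of_pow_eq_one hpow2m
  have hle : orderOf σ ≤ 2 * m := Nat.le_of_dvd (by omega) hdvd
  have hlt := aux_orderOf_perm_lt n hn pe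
  calc orderOf σ ≤ 2 * m := hle
  _ < 2 * 2 ^ (n - 1) := by omega
  _ = 2 ^ n := by
      have h3 : 2 ^ n = 2 ^ (n - 1 + 1) := by congr 1; omega
      rw [h3, pow_succ']
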